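/- The trace of any parameterized tree 𝒯 = (X, Γ) with K spanning points in ℝ³ is a one-ended topological tree: it is path-connected, contains no subset homeomorphic to the circle S¹, and for any two points z, w in the trace there exists a unique injective path in the trace from z to w. -/

import Mathlib

open Filter Set

noncomputable section

/-- A finite-duration parameterized curve in `ℝ³`: a continuous function together with
its duration `T ≥ 0` (only the values on `[0, T]` are relevant). -/
structure FiniteCurve where
  T : ℝ
  hT : 0 ≤ T
  toFun : ℝ → EuclideanSpace ℝ (Fin 3)
  cont : Continuous toFun

/-- The metric `ψ` on the space `C_f` of finite parameterized curves:
`ψ(γ₁,γ₂) = |T₁ − T₂| + max_{0 ≤ s ≤ 1} |γ₁(sT₁) − γ₂(sT₂)|`. -/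
noncomputable def psiDist (γ₁ γ₂ : FiniteCurve) : ℝ :=
  |γ₁.T - γ₂.T| +
    ⨆ s : Set.Icc (0 : ℝ) 1, dist (γ₁.toFun ((s : ℝ) * γ₁.T)) (γ₂.toFun ((s : ℝ) * γ₂.T))

/-- A transient parameterized curve in `ℝ³`: a continuous `γ : [0,∞) → ℝ³`
(modelled as a continuous function on `ℝ`) with `|γ(t)| → ∞` as `t → ∞`. -/
structure TransientCurve where
  toFun : ℝ → EuclideanSpace ℝ (Fin 3)
  cont : Continuous toFun
  transient : Tendsto (fun t => ‖toFun t‖) atTop atTop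

/-- The metric `χ` on the space `C` of transient curves:
`χ(γ₁,γ₂) = Σ_{k≥1} 2^{−k} (1 ∧ max_{t ≤ k} |γ₁(t) − γ₂(t)|)`. -/
noncomputable def chiDist (γ₁ γ₂ : TransientCurve) : ℝ :=
  ∑' k : ℕ, ((2 : ℝ) ^ (k + 1))⁻¹ *
    min 1 (⨆ t : Set.Icc (0 : ℝ) ((k : ℝ) + 1), dist (γ₁.toFun (t : ℝ)) (γ₂.toFun (t : ℝ)))

/-- A parameterized tree with `K` spanning points in `ℝ³`: spanning points `x i`, simple
transient curves `γ i` started at `x i`, and merging times `s i j` such that the curves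
`γ i` and `γ j` agree after times `s i j`, `s j i` respectively, while their strict initial
segments have disjoint traces. -/
structure ParamTree (K : ℕ) where
  x : Fin K → EuclideanSpace ℝ (Fin 3)
  γ : Fin K → TransientCurve
  start : ∀ i, (γ i).toFun 0 = x i
  simple : ∀ i, Set.InjOn (γ i).toFun (Set.Ici 0)
  s : Fin K → Fin K → ℝ
  s_nonneg : ∀ i j, 0 ≤ s i j
  merge : ∀ i j, ∀ u : ℝ, 0 ≤ u → (γ i).toFun (s i j + u) = (γ j).toFun (s j i + u)
  disj : ∀ i j, i ≠ j →
    Disjoint ((γ i).toFun '' Set.Ico 0 (s i j)) ((γ j).toFun '' Set.Ico 0 (s j i))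

/-- The trace of a parameterized tree: the union of the traces of its curves. -/
def ParamTree.trace {K : ℕ} (𝒯 : ParamTree K) : Set (EuclideanSpace ℝ (Fin 3)) :=
  ⋃ i, (𝒯.γ i).toFun '' Set.Ici 0

namespace PTreeAux

abbrev E3 := EuclideanSpace ℝ (Fin 3)

/-- Tails of transient curves are closed. -/
lemma tail_closed (γ : TransientCurve) (a : ℝ) : IsClosed (γ.toFun '' Ici a) := by
  apply isClosed_of_closure_subset
  intro p hp
  obtain ⟨T, hT⟩ : ∃ T, ∀ t ≥ T, ‖p‖ + 1 ≤ ‖γ.toFun t‖ :=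
    (γ.transient.eventually_ge_atTop (‖p‖ + 1)).exists_forall_of_atTop
  set M := max a T with hM
  have himg : γ.toFun '' Ici a = γ.toFun '' Icc a M ∪ γ.toFun '' Ici M := by
    rw [← image_union, Icc_union_Ici_eq_Ici (le_max_left a T)]
  rw [himg, closure_union] at hp
  rcases hp with h1 | h2
  · rw [(isCompact_Icc.image γ.cont).isClosed.closure_eq] at h1
    rw [himg]; exact Or.inl h1
  · exfalso
    have hsub : γ.toFun '' Ici M ⊆ {y : E3 | ‖p‖ + 1 ≤ ‖y‖} := by
      rintro y ⟨t, ht, rfl⟩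
      exact hT t (le_trans (le_max_right a T) ht)
    have hcl : IsClosed {y : E3 | ‖p‖ + 1 ≤ ‖y‖} :=
      isClosed_le continuous_const continuous_norm
    have := (closure_minimal hsub hcl) h2
    simp only [mem_setOf_eq] at this
    linarith

variable {K : ℕ} (𝒯 : ParamTree K)

lemma g_inj (i : Fin K) {t u : ℝ} (ht : 0 ≤ t) (hu : 0 ≤ u)
    (h : (𝒯.γ i).toFun t = (𝒯.γ i).toFun u) : t = u :=
  𝒯.simple i ht hu h

lemma mem_trace_iff {y : E3} :
    y ∈ 𝒯.trace ↔ ∃ i : Fin K, ∃ t : ℝ, 0 ≤ t ∧ (𝒯.γ i).toFun t = y := by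
  simp [ParamTree.trace, Set.mem_iUnion, Set.mem_image, Set.mem_Ici]

private lemma transfer_aux {i j : Fin K} {a b : ℝ} (ha : 0 ≤ a) (hb : 0 ≤ b)
    (hs : 𝒯.s i j ≤ a) (h : (𝒯.γ i).toFun a = (𝒯.γ j).toFun b) :
    ∀ u, 0 ≤ u → (𝒯.γ i).toFun (a + u) = (𝒯.γ j).toFun (b + u) := by
  have h1 : ∀ u, 0 ≤ u →
      (𝒯.γ i).toFun (a + u) = (𝒯.γ j).toFun (𝒯.s j i + (a - 𝒯.s i j) + u) := by
    intro u hu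
    have hm := 𝒯.merge i j (a - 𝒯.s i j + u) (by linarith)
    rw [show 𝒯.s i j + (a - 𝒯.s i j + u) = a + u by ring] at hm
    rw [hm, show 𝒯.s j i + (a - 𝒯.s i j + u) = 𝒯.s j i + (a - 𝒯.s i j) + u by ring]
  have hb' : b = 𝒯.s j i + (a - 𝒯.s i j) := by
    apply g_inj 𝒯 j hb (by linarith [𝒯.s_nonneg j i])
    rw [← h]
    simpa using h1 0 le_rfl
  intro u hu
  rw [hb']
  exact h1 u hu

/-- Key transfer lemma: two representations of the same point have identical futures. -/
lemma transfer {i j : Fin K} {a b : ℝ} (ha : 0 ≤ a) (hb : 0 ≤ b)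
    (h : (𝒯.γ i).toFun a = (𝒯.γ j).toFun b) :
    ∀ u, 0 ≤ u → (𝒯.γ i).toFun (a + u) = (𝒯.γ j).toFun (b + u) := by
  rcases eq_or_ne i j with rfl | hij
  · have : a = b := g_inj 𝒯 i ha hb h
    subst this; intro u hu; rfl
  have hcase : 𝒯.s i j ≤ a ∨ 𝒯.s j i ≤ b := by
    by_contra hc
    push_neg at hc
    exact Set.disjoint_left.1 (𝒯.disj i j hij) ⟨a, ⟨ha, hc.1⟩, rfl⟩ ⟨b, ⟨hb, hc.2⟩, h.symm⟩
  rcases hcase with hs | hs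
  · exact transfer_aux 𝒯 ha hb hs h
  · intro u hu
    exact (transfer_aux 𝒯 hb ha hs h.symm u hu).symm

/-- The meet: the set of times at which curve `i` (after `a`) lies on the tail of curve `j`
(after `b`) is a closed half-line `[m, ∞)`. -/
lemma meet_exists (i j : Fin K) {a b : ℝ} (ha : 0 ≤ a) (hb : 0 ≤ b) :
    ∃ m, a ≤ m ∧ (∀ t, a ≤ t →
      ((𝒯.γ i).toFun t ∈ (𝒯.γ j).toFun '' Ici b ↔ m ≤ t)) := by
  set T : Set ℝ := {t | a ≤ t ∧ (𝒯.γ i).toFun t ∈ (𝒯.γ j).toFun '' Ici b} with hT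
  have hup : ∀ t ∈ T, ∀ t', t ≤ t' → t' ∈ T := by
    rintro t ⟨hta, u, hu, hgu⟩ t' htt'
    refine ⟨le_trans hta htt', u + (t' - t), by simp only [mem_Ici] at hu ⊢; linarith, ?_⟩
    have := transfer 𝒯 (le_trans hb hu) (le_trans ha hta) hgu (t' - t) (by linarith)
    rw [this, show t + (t' - t) = t' by ring]
  have hne : T.Nonempty := by
    set t₀ := max a (max (𝒯.s i j) (𝒯.s i j + (b - 𝒯.s j i))) with ht₀
    have h1 : a ≤ t₀ := le_max_left _ _
    have h2 : 𝒯.s i j ≤ t₀ := le_trans (le_max_left _ _) (le_max_right _ _)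
    have h3 : 𝒯.s i j + (b - 𝒯.s j i) ≤ t₀ := le_trans (le_max_right _ _) (le_max_right _ _)
    have hm := 𝒯.merge i j (t₀ - 𝒯.s i j) (by linarith)
    rw [show 𝒯.s i j + (t₀ - 𝒯.s i j) = t₀ by ring] at hm
    exact ⟨t₀, h1, ⟨𝒯.s j i + (t₀ - 𝒯.s i j), by simp only [mem_Ici]; linarith, hm.symm⟩⟩
  have hbdd : BddBelow T := ⟨a, fun t ht => ht.1⟩
  have hcl : IsClosed T := by
    have : T = Ici a ∩ (𝒯.γ i).toFun ⁻¹' ((𝒯.γ j).toFun '' Ici b) := rfl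
    rw [this]
    exact isClosed_Ici.inter ((tail_closed (𝒯.γ j) b).preimage (𝒯.γ i).cont)
  have hmem : sInf T ∈ T := hcl.csInf_mem hne hbdd
  refine ⟨sInf T, hmem.1, fun t hta => ⟨fun hmem' => csInf_le hbdd ⟨hta, hmem'⟩,
    fun hle => (hup _ hmem _ hle).2⟩⟩

/-- The set of points strictly below `c` in the tree order (their future passes through `c`). -/
def Below (c : E3) : Set E3 :=
  {y | ∃ j : Fin K, ∃ u v : ℝ, 0 ≤ u ∧ u < v ∧ (𝒯.γ j).toFun u = y ∧ (𝒯.γ j).toFun v = c}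

/-- The set of points of the trace strictly above or incomparable with `c`. -/
def Above (c : E3) : Set E3 := 𝒯.trace \ (Below 𝒯 c ∪ {c})

lemma below_subset_trace (c : E3) : Below 𝒯 c ⊆ 𝒯.trace := by
  rintro y ⟨j, u, v, hu, huv, hy, hc⟩
  exact (mem_trace_iff 𝒯).2 ⟨j, u, hu, hy⟩

lemma not_below_self (c : E3) : c ∉ Below 𝒯 c := by
  rintro ⟨j, u, v, hu, huv, hy, hc⟩
  have := g_inj 𝒯 j hu (by linarith) (hy.trans hc.symm)
  linarith

lemma mem_below {c y : E3} {l : Fin K} {e d : ℝ} (he : 0 ≤ e)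
    (hrep : (𝒯.γ l).toFun e = y) (hd : 0 < d) (heq : (𝒯.γ l).toFun (e + d) = c) :
    y ∈ Below 𝒯 c :=
  ⟨l, e, e + d, he, by linarith, hrep, heq⟩

lemma below_elim {c y : E3} (hy : y ∈ Below 𝒯 c) {l : Fin K} {e : ℝ} (he : 0 ≤ e)
    (hrep : (𝒯.γ l).toFun e = y) : ∃ d, 0 < d ∧ (𝒯.γ l).toFun (e + d) = c := by
  obtain ⟨k, u, v, hu, huv, hky, hkc⟩ := hy
  refine ⟨v - u, by linarith, ?_⟩
  have := transfer 𝒯 hu he (hky.trans hrep.symm) (v - u) (by linarith)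
  rw [show u + (v - u) = v by ring] at this
  rw [← this, hkc]

lemma mem_above {c y : E3} {l : Fin K} {e : ℝ} (he : 0 ≤ e)
    (hrep : (𝒯.γ l).toFun e = y)
    (h : ∀ d, 0 ≤ d → (𝒯.γ l).toFun (e + d) ≠ c) : y ∈ Above 𝒯 c := by
  refine ⟨(mem_trace_iff 𝒯).2 ⟨l, e, he, hrep⟩, ?_⟩
  rintro (hb | hb)
  · obtain ⟨d, hd, heq⟩ := below_elim 𝒯 hb he hrep
    exact h d hd.le heq
  · refine h 0 le_rfl ?_
    rw [add_zero, hrep]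
    exact hb

/-- The two-sided separation of the trace at a point `c`. -/
lemma cut {c : E3} (hc : c ∈ 𝒯.trace) :
    ∃ U V : Set E3, IsOpen U ∧ IsOpen V ∧
      𝒯.trace ∩ U = Below 𝒯 c ∧ 𝒯.trace ∩ V = Above 𝒯 c := by
  classical
  set hit : Fin K → ℝ := fun j =>
    if h : ∃ v, 0 ≤ v ∧ (𝒯.γ j).toFun v = c then h.choose else 0 with hhit
  have hit_nonneg : ∀ j, 0 ≤ hit j := by
    intro j
    by_cases h : ∃ v, 0 ≤ v ∧ (𝒯.γ j).toFun v = c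
    · simp only [hhit, dif_pos h]; exact h.choose_spec.1
    · simp [hhit, dif_neg h]
  have hit_spec : ∀ j (h : ∃ v, 0 ≤ v ∧ (𝒯.γ j).toFun v = c),
      (𝒯.γ j).toFun (hit j) = c := by
    intro j h
    simp only [hhit, dif_pos h]
    exact h.choose_spec.2
  set C1 : Set E3 := ⋃ j, (𝒯.γ j).toFun '' Ici (hit j) with hC1
  set C2 : Set E3 := ⋃ j, (if ∃ v, 0 ≤ v ∧ (𝒯.γ j).toFun v = c
      then (𝒯.γ j).toFun '' Icc 0 (hit j) else ∅) with hC2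
  have hC1cl : IsClosed C1 := isClosed_iUnion_of_finite fun j => tail_closed (𝒯.γ j) (hit j)
  have hC2cl : IsClosed C2 := by
    apply isClosed_iUnion_of_finite
    intro j
    split_ifs
    · exact (isCompact_Icc.image (𝒯.γ j).cont).isClosed
    · exact isClosed_empty
  refine ⟨C1ᶜ, C2ᶜ, hC1cl.isOpen_compl, hC2cl.isOpen_compl, ?_, ?_⟩
  · ext y
    constructor
    · rintro ⟨hyt, hyC⟩
      obtain ⟨j, u, hu, rfl⟩ := (mem_trace_iff 𝒯).1 hyt
      by_contra hyb
      apply hyC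
      refine mem_iUnion.2 ⟨j, u, ?_, rfl⟩
      simp only [mem_Ici]
      by_cases h : ∃ v, 0 ≤ v ∧ (𝒯.γ j).toFun v = c
      · by_contra hlt
        push_neg at hlt
        exact hyb (mem_below 𝒯 hu rfl (d := hit j - u) (by linarith)
          (by rw [show u + (hit j - u) = hit j by ring]; exact hit_spec j h))
      · simp only [hhit, dif_neg h]; exact hu
    · intro hy
      refine ⟨below_subset_trace 𝒯 c hy, ?_⟩
      intro hyC
      obtain ⟨j, u, hu', hyu⟩ := mem_iUnion.1 hyC
      simp only [mem_Ici] at hu'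
      have hu0 : 0 ≤ u := le_trans (hit_nonneg j) hu'
      obtain ⟨d, hd, heq⟩ := below_elim 𝒯 hy hu0 hyu
      have hex : ∃ v, 0 ≤ v ∧ (𝒯.γ j).toFun v = c := ⟨u + d, by linarith, heq⟩
      have := g_inj 𝒯 j (hit_nonneg j) (by linarith) ((hit_spec j hex).trans heq.symm)
      linarith
  · ext y
    constructor
    · rintro ⟨hyt, hyC⟩
      refine ⟨hyt, ?_⟩
      rintro (hb | hb)
      · apply hyC
        obtain ⟨k, u, v, hu, huv, hky, hkc⟩ := hb
        have hex : ∃ v', 0 ≤ v' ∧ (𝒯.γ k).toFun v' = c := ⟨v, by linarith, hkc⟩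
        have hhitv : hit k = v :=
          g_inj 𝒯 k (hit_nonneg k) (by linarith) ((hit_spec k hex).trans hkc.symm)
        refine mem_iUnion.2 ⟨k, ?_⟩
        rw [if_pos hex]
        exact ⟨u, ⟨hu, by rw [hhitv]; linarith⟩, hky⟩
      · apply hyC
        have hyc : y = c := hb
        obtain ⟨i0, t0, ht0, hgt0⟩ := (mem_trace_iff 𝒯).1 hc
        have hex : ∃ v', 0 ≤ v' ∧ (𝒯.γ i0).toFun v' = c := ⟨t0, ht0, hgt0⟩
        refine mem_iUnion.2 ⟨i0, ?_⟩
        rw [if_pos hex, hyc]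
        exact ⟨hit i0, ⟨hit_nonneg i0, le_rfl⟩, hit_spec i0 hex⟩
    · rintro ⟨hyt, hyn⟩
      refine ⟨hyt, ?_⟩
      intro hyC
      obtain ⟨j, hyj⟩ := mem_iUnion.1 hyC
      by_cases hex : ∃ v, 0 ≤ v ∧ (𝒯.γ j).toFun v = c
      · rw [if_pos hex] at hyj
        obtain ⟨u, ⟨hu0, huh⟩, hyu⟩ := hyj
        rcases eq_or_lt_of_le huh with heq | hlt
        · exact hyn (Or.inr (by
            simp only [mem_singleton_iff]
            rw [← hyu, heq, hit_spec j hex]))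
        · exact hyn (Or.inl (mem_below 𝒯 hu0 hyu (d := hit j - u) (by linarith)
            (by rw [show u + (hit j - u) = hit j by ring]; exact hit_spec j hex)))
      · rw [if_neg hex] at hyj
        exact hyj

/-- A preconnected subset of the trace containing points on both sides of `c` contains `c`. -/
lemma cross {S : Set E3} (hS : IsPreconnected S) (hSt : S ⊆ 𝒯.trace)
    {c z w : E3} (hc : c ∈ 𝒯.trace) (hz : z ∈ S) (hw : w ∈ S)
    (hzB : z ∈ Below 𝒯 c) (hwA : w ∈ Above 𝒯 c) : c ∈ S := by
  by_contra hcS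
  obtain ⟨U, V, hU, hV, hUeq, hVeq⟩ := cut 𝒯 hc
  have hBU : ∀ y, y ∈ Below 𝒯 c → y ∈ U := by
    intro y hy
    have h : y ∈ 𝒯.trace ∩ U := by rw [hUeq]; exact hy
    exact h.2
  have hAV : ∀ y, y ∈ Above 𝒯 c → y ∈ V := by
    intro y hy
    have h : y ∈ 𝒯.trace ∩ V := by rw [hVeq]; exact hy
    exact h.2
  have hSUV : S ⊆ U ∪ V := by
    intro y hy
    have hyt := hSt hy
    by_cases hyB : y ∈ Below 𝒯 c
    · exact Or.inl (hBU y hyB)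
    · by_cases hyc : y = c
      · exact absurd (hyc ▸ hy) hcS
      · refine Or.inr (hAV y ⟨hyt, ?_⟩)
        rintro (h | h)
        · exact hyB h
        · exact hyc h
  have hzU : z ∈ S ∩ U := ⟨hz, hBU z hzB⟩
  have hwV : w ∈ S ∩ V := ⟨hw, hAV w hwA⟩
  obtain ⟨y, hyS, hyU, hyV⟩ := hS U V hU hV hSUV ⟨z, hzU⟩ ⟨w, hwV⟩
  have hyB : y ∈ Below 𝒯 c := by rw [← hUeq]; exact ⟨hSt hyS, hyU⟩
  have hyA : y ∈ Above 𝒯 c := by rw [← hVeq]; exact ⟨hSt hyS, hyV⟩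
  exact hyA.2 (Or.inl hyB)

/-- A monotone linear path along a curve. -/
def segPath (i : Fin K) {a b : ℝ} (hab : a ≤ b) :
    Path ((𝒯.γ i).toFun a) ((𝒯.γ i).toFun b) where
  toFun t := (𝒯.γ i).toFun (a + (t : ℝ) * (b - a))
  continuous_toFun := (𝒯.γ i).cont.comp (by fun_prop)
  source' := by simp
  target' := by simp

lemma segPath_apply (i : Fin K) {a b : ℝ} (hab : a ≤ b) (t : unitInterval) :
    (segPath 𝒯 i hab) t = (𝒯.γ i).toFun (a + (t : ℝ) * (b - a)) := rfl

lemma segPath_mem (i : Fin K) {a b : ℝ} (hab : a ≤ b) (t : unitInterval) :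
    (segPath 𝒯 i hab) t ∈ (𝒯.γ i).toFun '' Icc a b := by
  refine ⟨a + (t : ℝ) * (b - a), ⟨?_, ?_⟩, rfl⟩
  · nlinarith [t.2.1, t.2.2]
  · nlinarith [t.2.1, t.2.2]

lemma segPath_range (i : Fin K) {a b : ℝ} (hab : a ≤ b) :
    range ⇑(segPath 𝒯 i hab) ⊆ (𝒯.γ i).toFun '' Icc a b := by
  rintro y ⟨t, rfl⟩
  exact segPath_mem 𝒯 i hab t

lemma segPath_inj (i : Fin K) {a b : ℝ} (ha : 0 ≤ a) (hab : a < b) :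
    Function.Injective ⇑(segPath 𝒯 i hab.le) := by
  intro t u h
  rw [segPath_apply, segPath_apply] at h
  have h1 := g_inj 𝒯 i (by nlinarith [t.2.1, t.2.2]) (by nlinarith [u.2.1, u.2.2]) h
  have h2 : (t : ℝ) = u := by
    have hba : b - a ≠ 0 := by linarith
    have h3 : ((t : ℝ) - u) * (b - a) = 0 := by linear_combination h1
    rcases mul_eq_zero.1 h3 with h3 | h3
    · linarith
    · exact absurd h3 hba
  exact Subtype.ext h2

lemma symm_inj {X : Type*} [TopologicalSpace X] {x y : X} {p : Path x y}
    (hp : Function.Injective ⇑p) : Function.Injective ⇑p.symm := by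
  intro s t h
  have h' : p (unitInterval.symm s) = p (unitInterval.symm t) := h
  exact unitInterval.symm_inj.1 (hp h')

/-- Concatenation of injective paths meeting only at the common endpoint is injective. -/
lemma trans_inj {X : Type*} [TopologicalSpace X] {x y z : X} {p : Path x y} {q : Path y z}
    (hp : Function.Injective ⇑p) (hq : Function.Injective ⇑q)
    (hint : ∀ s t, p s = q t → p s = y) : Function.Injective ⇑(p.trans q) := by
  intro s t hst
  rw [Path.trans_apply, Path.trans_apply] at hst
  split_ifs at hst with h1 h2 h2
  · have := congrArg Subtype.val (hp hst)
    simp only at this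
    exact Subtype.ext (by linarith)
  · have hy : p _ = y := hint _ _ hst
    have hs : (2 : ℝ) * s = 1 := by
      have := congrArg Subtype.val (hp (hy.trans p.target.symm))
      simpa using this
    have ht : (2 : ℝ) * t - 1 = 0 := by
      have hy2 : q _ = y := hst ▸ hy
      have := congrArg Subtype.val (hq (hy2.trans q.source.symm))
      simpa using this
    exact Subtype.ext (by linarith)
  · have hy : p _ = y := hint _ _ hst.symm
    have ht : (2 : ℝ) * t = 1 := by
      have := congrArg Subtype.val (hp (hy.trans p.target.symm))
      simpa using this
    have hs : (2 : ℝ) * s - 1 = 0 := by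
      have hy2 : q _ = y := hst.symm ▸ hy
      have := congrArg Subtype.val (hq (hy2.trans q.source.symm))
      simpa using this
    exact Subtype.ext (by linarith)
  · have := congrArg Subtype.val (hq hst)
    simp only at this
    exact Subtype.ext (by linarith)

/-- If an injective path joins two points on one side of `c` while passing through the other
side at time `τ`, then it passes through `c` exactly at time `τ`. -/
lemma pass_through {z w : E3} (p : Path z w) (hp : Function.Injective ⇑p)
    (hpr : range ⇑p ⊆ 𝒯.trace) {c : E3} (hc : c ∈ 𝒯.trace) (τ : unitInterval)
    (hor : (z ∈ Below 𝒯 c ∧ w ∈ Below 𝒯 c ∧ p τ ∈ Above 𝒯 c) ∨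
           (z ∈ Above 𝒯 c ∧ w ∈ Above 𝒯 c ∧ p τ ∈ Below 𝒯 c)) : c = p τ := by
  set S1 := p.extend '' Icc 0 (τ : ℝ) with hS1
  set S2 := p.extend '' Icc (τ : ℝ) 1 with hS2
  have hS1r : S1 ⊆ range ⇑p := by
    rw [← Path.extend_range]; exact image_subset_range _ _
  have hS2r : S2 ⊆ range ⇑p := by
    rw [← Path.extend_range]; exact image_subset_range _ _
  have hS1c : IsPreconnected S1 := isPreconnected_Icc.image _ p.continuous_extend.continuousOn
  have hS2c : IsPreconnected S2 := isPreconnected_Icc.image _ p.continuous_extend.continuousOn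
  have hzS1 : z ∈ S1 := ⟨0, ⟨le_rfl, τ.2.1⟩, p.extend_zero⟩
  have hτS1 : p τ ∈ S1 := ⟨(τ : ℝ), ⟨τ.2.1, le_rfl⟩, p.extend_extends' τ⟩
  have hwS2 : w ∈ S2 := ⟨1, ⟨τ.2.2, le_rfl⟩, p.extend_one⟩
  have hτS2 : p τ ∈ S2 := ⟨(τ : ℝ), ⟨le_rfl, τ.2.2⟩, p.extend_extends' τ⟩
  have hc1 : c ∈ S1 := by
    rcases hor with ⟨hzB, _, hτA⟩ | ⟨hzA, _, hτB⟩
    · exact cross 𝒯 hS1c (hS1r.trans hpr) hc hzS1 hτS1 hzB hτA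
    · exact cross 𝒯 hS1c (hS1r.trans hpr) hc hτS1 hzS1 hτB hzA
  have hc2 : c ∈ S2 := by
    rcases hor with ⟨_, hwB, hτA⟩ | ⟨_, hwA, hτB⟩
    · exact cross 𝒯 hS2c (hS2r.trans hpr) hc hwS2 hτS2 hwB hτA
    · exact cross 𝒯 hS2c (hS2r.trans hpr) hc hτS2 hwS2 hτB hwA
  obtain ⟨s1, hs1, he1⟩ := hc1
  obtain ⟨s2, hs2, he2⟩ := hc2
  have hs1' : s1 ∈ Icc (0 : ℝ) 1 := ⟨hs1.1, le_trans hs1.2 τ.2.2⟩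
  have hs2' : s2 ∈ Icc (0 : ℝ) 1 := ⟨le_trans τ.2.1 hs2.1, hs2.2⟩
  rw [p.extend_apply hs1'] at he1
  rw [p.extend_apply hs2'] at he2
  have h12 : s1 = s2 := congrArg Subtype.val (hp (he1.trans he2.symm))
  have hs1τ : s1 = (τ : ℝ) := le_antisymm hs1.2 (by rw [h12]; exact hs2.1)
  rw [← he1]
  congr 1
  exact Subtype.ext hs1τ

/-- One half of the canonical arc is contained in the range of any injective path. -/
lemma side_sub {i j : Fin K} {a b mi : ℝ} {z w : E3}
    (ha : 0 ≤ a) (hb : 0 ≤ b) (hza : (𝒯.γ i).toFun a = z) (hwb : (𝒯.γ j).toFun b = w)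
    (hami : a ≤ mi)
    (hmi : ∀ t, a ≤ t → ((𝒯.γ i).toFun t ∈ (𝒯.γ j).toFun '' Ici b ↔ mi ≤ t))
    (p : Path z w) (hp : Function.Injective ⇑p) (hpr : range ⇑p ⊆ 𝒯.trace) :
    (𝒯.γ i).toFun '' Icc a mi ⊆ range ⇑p := by
  have hrc : IsPreconnected (range ⇑p) := isPreconnected_range p.continuous
  have hzr : z ∈ range ⇑p := ⟨0, p.source⟩
  have hwr : w ∈ range ⇑p := ⟨1, p.target⟩
  have hopen : ∀ t, a < t → t < mi → (𝒯.γ i).toFun t ∈ range ⇑p := by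
    intro t hat htm
    have ht0 : 0 ≤ t := le_trans ha hat.le
    have hct : (𝒯.γ i).toFun t ∈ 𝒯.trace := (mem_trace_iff 𝒯).2 ⟨i, t, ht0, rfl⟩
    have hzB : z ∈ Below 𝒯 ((𝒯.γ i).toFun t) :=
      mem_below 𝒯 ha hza (d := t - a) (by linarith)
        (by rw [show a + (t - a) = t by ring])
    have hwA : w ∈ Above 𝒯 ((𝒯.γ i).toFun t) := by
      refine mem_above 𝒯 hb hwb ?_
      intro d hd heq
      have hmem : (𝒯.γ i).toFun t ∈ (𝒯.γ j).toFun '' Ici b :=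
        ⟨b + d, by simp only [mem_Ici]; linarith, heq⟩
      have := (hmi t hat.le).1 hmem
      linarith
    exact cross 𝒯 hrc hpr hct hzr hwr hzB hwA
  rintro y ⟨t, ⟨hta, htm⟩, rfl⟩
  rcases eq_or_lt_of_le hta with rfl | hat
  · rw [hza]; exact hzr
  rcases eq_or_lt_of_le htm with rfl | htm'
  · have hsub : (𝒯.γ i).toFun '' Ioo a t ⊆ range ⇑p := by
      rintro y' ⟨t', ⟨h1, h2⟩, rfl⟩
      exact hopen t' h1 h2
    have h1 : (𝒯.γ i).toFun t ∈ (𝒯.γ i).toFun '' closure (Ioo a t) :=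
      ⟨t, by rw [closure_Ioo (ne_of_lt hat)]; exact ⟨hat.le, le_rfl⟩, rfl⟩
    have h2 := (image_closure_subset_closure_image (𝒯.γ i).cont) h1
    have h3 := closure_mono hsub h2
    rwa [(isCompact_range p.continuous).isClosed.closure_eq] at h3
  · exact hopen t hat htm'

/-- Canonical representatives and meet structure for a pair of points of the trace. -/
lemma setup_exists {z w : E3} (hz : z ∈ 𝒯.trace) (hw : w ∈ 𝒯.trace) :
    ∃ (i j : Fin K) (a b mi mj : ℝ), 0 ≤ a ∧ 0 ≤ b ∧
      (𝒯.γ i).toFun a = z ∧ (𝒯.γ j).toFun b = w ∧ a ≤ mi ∧ b ≤ mj ∧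
      (∀ t, a ≤ t → ((𝒯.γ i).toFun t ∈ (𝒯.γ j).toFun '' Ici b ↔ mi ≤ t)) ∧
      (∀ t, b ≤ t → ((𝒯.γ j).toFun t ∈ (𝒯.γ i).toFun '' Ici a ↔ mj ≤ t)) ∧
      (𝒯.γ i).toFun mi = (𝒯.γ j).toFun mj := by
  obtain ⟨i, a, ha, hza⟩ := (mem_trace_iff 𝒯).1 hz
  obtain ⟨j, b, hb, hwb⟩ := (mem_trace_iff 𝒯).1 hw
  obtain ⟨mi, hami, hmi⟩ := meet_exists 𝒯 i j ha hb
  obtain ⟨mj, hbmj, hmj⟩ := meet_exists 𝒯 j i hb ha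
  obtain ⟨u, hu, hgu⟩ := (hmi mi hami).2 le_rfl
  simp only [mem_Ici] at hu
  have hmju : mj ≤ u := (hmj u hu).1 ⟨mi, by simp only [mem_Ici]; exact hami, hgu.symm⟩
  obtain ⟨t', ht', hgt'⟩ := (hmj mj hbmj).2 le_rfl
  simp only [mem_Ici] at ht'
  have hmit' : mi ≤ t' := (hmi t' ht').1 ⟨mj, by simp only [mem_Ici]; exact hbmj, hgt'.symm⟩
  have htr := transfer 𝒯 (le_trans hb hu) (le_trans ha hami) hgu (t' - mi) (by linarith)
  rw [show mi + (t' - mi) = t' by ring, hgt'] at htr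
  have heq : u + (t' - mi) = mj := g_inj 𝒯 j (by linarith) (le_trans hb hbmj) htr
  have hu_mj : u = mj := by linarith
  refine ⟨i, j, a, b, mi, mj, ha, hb, hza, hwb, hami, hbmj, hmi, hmj, ?_⟩
  rw [← hgu, hu_mj]

/-- The range of any injective path between `z` and `w` inside the trace equals the
canonical arc. -/
lemma range_eq_arc {i j : Fin K} {a b mi mj : ℝ} {z w : E3}
    (ha : 0 ≤ a) (hb : 0 ≤ b) (hza : (𝒯.γ i).toFun a = z) (hwb : (𝒯.γ j).toFun b = w)
    (hami : a ≤ mi) (hbmj : b ≤ mj)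
    (hmi : ∀ t, a ≤ t → ((𝒯.γ i).toFun t ∈ (𝒯.γ j).toFun '' Ici b ↔ mi ≤ t))
    (hmj : ∀ t, b ≤ t → ((𝒯.γ j).toFun t ∈ (𝒯.γ i).toFun '' Ici a ↔ mj ≤ t))
    (hμ : (𝒯.γ i).toFun mi = (𝒯.γ j).toFun mj)
    (p : Path z w) (hp : Function.Injective ⇑p) (hpr : range ⇑p ⊆ 𝒯.trace) :
    range ⇑p = (𝒯.γ i).toFun '' Icc a mi ∪ (𝒯.γ j).toFun '' Icc b mj := by
  apply Subset.antisymm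
  · rintro y ⟨τ, rfl⟩
    by_contra hyarc
    obtain ⟨k, r, hr, hrx⟩ := (mem_trace_iff 𝒯).1 (hpr ⟨τ, rfl⟩)
    obtain ⟨m1, hrm1, h1iff⟩ := meet_exists 𝒯 k i hr ha
    obtain ⟨m2, hrm2, h2iff⟩ := meet_exists 𝒯 k j hr hb
    set v := min m1 m2 with hv
    have hrv : r ≤ v := le_min hrm1 hrm2
    rcases eq_or_lt_of_le hrv with hveq | hvlt
    · -- branch point case : `p τ` sits above the meet on one of the two sides
      have hm12 : m1 = r ∨ m2 = r := by
        rcases le_total m1 m2 with h | h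
        · left; rw [hveq, hv, min_eq_left h]
        · right; rw [hveq, hv, min_eq_right h]
      rcases hm12 with hm1r | hm2r
      · -- p τ is on the tail of γ i above mi
        have hx1 : (𝒯.γ k).toFun r ∈ (𝒯.γ i).toFun '' Ici a :=
          (h1iff r le_rfl).2 (le_of_eq hm1r)
        obtain ⟨t₁, ht₁, he⟩ := hx1
        simp only [mem_Ici] at ht₁
        have ht₁mi : mi < t₁ := by
          by_contra hle
          push_neg at hle
          exact hyarc (Or.inl ⟨t₁, ⟨ht₁, hle⟩, by rw [he, hrx]⟩)
        set t := (mi + t₁) / 2 with htdef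
        have htgt : mi < t := by rw [htdef]; linarith
        have htlt : t < t₁ := by rw [htdef]; linarith
        have ht0 : 0 ≤ t := by linarith [le_trans ha hami]
        have hct : (𝒯.γ i).toFun t ∈ 𝒯.trace := (mem_trace_iff 𝒯).2 ⟨i, t, ht0, rfl⟩
        have hzB : z ∈ Below 𝒯 ((𝒯.γ i).toFun t) :=
          mem_below 𝒯 ha hza (d := t - a) (by linarith)
            (by rw [show a + (t - a) = t by ring])
        have hwB : w ∈ Below 𝒯 ((𝒯.γ i).toFun t) := by
          apply mem_below 𝒯 hb hwb (d := mj + (t - mi) - b) (by linarith)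
          have htr := transfer 𝒯 (le_trans ha hami) (le_trans hb hbmj) hμ (t - mi)
            (by linarith)
          rw [show b + (mj + (t - mi) - b) = mj + (t - mi) by ring, ← htr,
            show mi + (t - mi) = t by ring]
        have hxA : p τ ∈ Above 𝒯 ((𝒯.γ i).toFun t) := by
          apply mem_above 𝒯 (le_trans ha ht₁) (he.trans hrx)
          intro d hd heqd
          have := g_inj 𝒯 i (by linarith) ht0 heqd
          linarith
        have hpass := pass_through 𝒯 p hp hpr hct τ (Or.inl ⟨hzB, hwB, hxA⟩)
        have hteq : t = t₁ :=
          g_inj 𝒯 i ht0 (le_trans ha ht₁) (hpass.trans (he.trans hrx).symm)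
        linarith
      · -- p τ is on the tail of γ j above mj
        have hx1 : (𝒯.γ k).toFun r ∈ (𝒯.γ j).toFun '' Ici b :=
          (h2iff r le_rfl).2 (le_of_eq hm2r)
        obtain ⟨u₁, hu₁, he⟩ := hx1
        simp only [mem_Ici] at hu₁
        have hu₁mj : mj < u₁ := by
          by_contra hle
          push_neg at hle
          exact hyarc (Or.inr ⟨u₁, ⟨hu₁, hle⟩, by rw [he, hrx]⟩)
        set t := (mj + u₁) / 2 with htdef
        have htgt : mj < t := by rw [htdef]; linarith
        have htlt : t < u₁ := by rw [htdef]; linarith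
        have ht0 : 0 ≤ t := by linarith [le_trans hb hbmj]
        have hct : (𝒯.γ j).toFun t ∈ 𝒯.trace := (mem_trace_iff 𝒯).2 ⟨j, t, ht0, rfl⟩
        have hwB : w ∈ Below 𝒯 ((𝒯.γ j).toFun t) :=
          mem_below 𝒯 hb hwb (d := t - b) (by linarith)
            (by rw [show b + (t - b) = t by ring])
        have hzB : z ∈ Below 𝒯 ((𝒯.γ j).toFun t) := by
          apply mem_below 𝒯 ha hza (d := mi + (t - mj) - a) (by linarith)
          have htr := transfer 𝒯 (le_trans hb hbmj) (le_trans ha hami) hμ.symm (t - mj)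
            (by linarith)
          rw [show a + (mi + (t - mj) - a) = mi + (t - mj) by ring, ← htr,
            show mj + (t - mj) = t by ring]
        have hxA : p τ ∈ Above 𝒯 ((𝒯.γ j).toFun t) := by
          apply mem_above 𝒯 (le_trans hb hu₁) (he.trans hrx)
          intro d hd heqd
          have := g_inj 𝒯 j (by linarith) ht0 heqd
          linarith
        have hpass := pass_through 𝒯 p hp hpr hct τ (Or.inl ⟨hzB, hwB, hxA⟩)
        have hteq : t = u₁ :=
          g_inj 𝒯 j ht0 (le_trans hb hu₁) (hpass.trans (he.trans hrx).symm)
        linarith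
    · -- p τ is strictly below the branch point : separate it from both z and w
      set t := (r + v) / 2 with htdef
      have h1t : r < t := by rw [htdef]; linarith
      have h2t : t < v := by rw [htdef]; linarith
      have ht0 : 0 ≤ t := le_trans hr h1t.le
      have hct : (𝒯.γ k).toFun t ∈ 𝒯.trace := (mem_trace_iff 𝒯).2 ⟨k, t, ht0, rfl⟩
      have hxB : p τ ∈ Below 𝒯 ((𝒯.γ k).toFun t) :=
        mem_below 𝒯 hr hrx (d := t - r) (by linarith)
          (by rw [show r + (t - r) = t by ring])
      have hzA : z ∈ Above 𝒯 ((𝒯.γ k).toFun t) := by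
        apply mem_above 𝒯 ha hza
        intro d hd heq
        have hmem : (𝒯.γ k).toFun t ∈ (𝒯.γ i).toFun '' Ici a :=
          ⟨a + d, by simp only [mem_Ici]; linarith, heq⟩
        have := (h1iff t (by linarith)).1 hmem
        have hvm1 : v ≤ m1 := min_le_left _ _
        linarith
      have hwA : w ∈ Above 𝒯 ((𝒯.γ k).toFun t) := by
        apply mem_above 𝒯 hb hwb
        intro d hd heq
        have hmem : (𝒯.γ k).toFun t ∈ (𝒯.γ j).toFun '' Ici b :=
          ⟨b + d, by simp only [mem_Ici]; linarith, heq⟩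
        have := (h2iff t (by linarith)).1 hmem
        have hvm2 : v ≤ m2 := min_le_right _ _
        linarith
      have hpass := pass_through 𝒯 p hp hpr hct τ (Or.inr ⟨hzA, hwA, hxB⟩)
      have hteq : t = r := g_inj 𝒯 k ht0 hr (hpass.trans hrx.symm)
      linarith
  · rintro y (hy | hy)
    · exact side_sub 𝒯 ha hb hza hwb hami hmi p hp hpr hy
    · have := side_sub 𝒯 hb ha hwb hza hbmj hmj p.symm (symm_inj hp)
        (by rw [Path.symm_range]; exact hpr) hy
      rwa [Path.symm_range] at this

lemma unique_range {z w : E3} (hz : z ∈ 𝒯.trace) (hw : w ∈ 𝒯.trace)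
    (p q : Path z w) (hp : Function.Injective ⇑p) (hpr : range ⇑p ⊆ 𝒯.trace)
    (hq : Function.Injective ⇑q) (hqr : range ⇑q ⊆ 𝒯.trace) :
    range ⇑p = range ⇑q := by
  obtain ⟨i, j, a, b, mi, mj, ha, hb, hza, hwb, hami, hbmj, hmi, hmj, hμ⟩ :=
    setup_exists 𝒯 hz hw
  rw [range_eq_arc 𝒯 ha hb hza hwb hami hbmj hmi hmj hμ p hp hpr,
    range_eq_arc 𝒯 ha hb hza hwb hami hbmj hmi hmj hμ q hq hqr]

lemma exists_inj_path {z w : E3} (hz : z ∈ 𝒯.trace) (hw : w ∈ 𝒯.trace) (hzw : z ≠ w) :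
    ∃ p : Path z w, Function.Injective ⇑p ∧ range ⇑p ⊆ 𝒯.trace := by
  obtain ⟨i, j, a, b, mi, mj, ha, hb, hza, hwb, hami, hbmj, hmi, hmj, hμ⟩ :=
    setup_exists 𝒯 hz hw
  have htr_i : (𝒯.γ i).toFun '' Icc a mi ⊆ 𝒯.trace := by
    rintro y ⟨t, ⟨h1, h2⟩, rfl⟩
    exact (mem_trace_iff 𝒯).2 ⟨i, t, le_trans ha h1, rfl⟩
  have htr_j : (𝒯.γ j).toFun '' Icc b mj ⊆ 𝒯.trace := by
    rintro y ⟨t, ⟨h1, h2⟩, rfl⟩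
    exact (mem_trace_iff 𝒯).2 ⟨j, t, le_trans hb h1, rfl⟩
  rcases eq_or_lt_of_le hami with rfl | hami'
  · -- z is the meet point
    have hzμ : (𝒯.γ j).toFun mj = z := by rw [← hμ, hza]
    have hbmj' : b < mj := by
      rcases eq_or_lt_of_le hbmj with rfl | h
      · exact absurd (hzμ.symm.trans hwb) hzw
      · exact h
    refine ⟨((segPath 𝒯 j hbmj).symm).cast hzμ.symm hwb.symm, ?_, ?_⟩
    · rw [Path.cast_coe]
      exact symm_inj (segPath_inj 𝒯 j hb hbmj')
    · rw [Path.cast_coe, Path.symm_range]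
      exact (segPath_range 𝒯 j hbmj).trans htr_j
  rcases eq_or_lt_of_le hbmj with rfl | hbmj'
  · -- w is the meet point
    have hwμ : w = (𝒯.γ i).toFun mi := hwb.symm.trans hμ.symm
    refine ⟨(segPath 𝒯 i hami'.le).cast hza.symm hwμ, ?_, ?_⟩
    · rw [Path.cast_coe]
      exact segPath_inj 𝒯 i ha hami'
    · rw [Path.cast_coe]
      exact (segPath_range 𝒯 i hami'.le).trans htr_i
  · -- generic case : concatenate the two half arcs
    set p1 := segPath 𝒯 i hami'.le with hp1
    set p2 := ((segPath 𝒯 j hbmj'.le).symm).cast hμ rfl with hp2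
    have hp2coe : ⇑p2 = ⇑(segPath 𝒯 j hbmj'.le).symm := by rw [hp2, Path.cast_coe]
    have hint : ∀ s t, p1 s = p2 t → p1 s = (𝒯.γ i).toFun mi := by
      intro s t hst
      obtain ⟨t1, ⟨ht1a, ht1m⟩, he1⟩ := segPath_mem 𝒯 i hami'.le s
      have h2m : p2 t ∈ (𝒯.γ j).toFun '' Icc b mj := by
        rw [hp2coe]
        have : (segPath 𝒯 j hbmj'.le).symm t ∈ range ⇑(segPath 𝒯 j hbmj'.le) := by
          rw [← Path.symm_range]
          exact mem_range_self t
        exact segPath_range 𝒯 j hbmj'.le this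
      obtain ⟨u1, ⟨hu1b, hu1m⟩, he2⟩ := h2m
      have hmem : (𝒯.γ i).toFun t1 ∈ (𝒯.γ j).toFun '' Ici b := by
        refine ⟨u1, by simp only [mem_Ici]; exact hu1b, ?_⟩
        rw [he2, ← hst, he1]
      have ht1mi : mi ≤ t1 := (hmi t1 ht1a).1 hmem
      have : t1 = mi := le_antisymm ht1m ht1mi
      rw [← he1, this]
    refine ⟨(p1.trans p2).cast hza.symm hwb.symm, ?_, ?_⟩
    · rw [Path.cast_coe]
      have hq2 : Function.Injective ⇑p2 := by
        rw [hp2coe]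
        exact symm_inj (segPath_inj 𝒯 j hb hbmj')
      exact trans_inj (segPath_inj 𝒯 i ha hami') hq2 hint
    · rw [Path.cast_coe, Path.trans_range]
      rintro y (hy | hy)
      · exact htr_i ((segPath_range 𝒯 i hami'.le) hy)
      · rw [hp2coe, Path.symm_range] at hy
        exact htr_j ((segPath_range 𝒯 j hbmj'.le) hy)

lemma exp_inj_interval {x y : ℝ} (h : Circle.exp x = Circle.exp y)
    (hb : |x - y| < 2 * Real.pi) : x = y := by
  obtain ⟨m, hm⟩ := Circle.exp_eq_exp.1 h
  have hx : x - y = m * (2 * Real.pi) := by linarith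
  rcases eq_or_ne m 0 with rfl | hm0
  · push_cast at hx; linarith
  · exfalso
    have h1 : (1 : ℝ) ≤ |(m : ℝ)| := by
      have := Int.one_le_abs hm0
      calc (1:ℝ) = ((1:ℤ):ℝ) := by norm_num
        _ ≤ ((|m| : ℤ) : ℝ) := by exact_mod_cast this
        _ = |(m:ℝ)| := by push_cast; ring
    have h2 : |x - y| = |(m:ℝ)| * (2 * Real.pi) := by
      rw [hx, abs_mul, abs_of_pos (by positivity : (0:ℝ) < 2 * Real.pi)]
    nlinarith [Real.pi_pos]

lemma trace_pathConnected (hK : 0 < K) : IsPathConnected 𝒯.trace := by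
  have hz0 : (𝒯.γ ⟨0, hK⟩).toFun 0 ∈ 𝒯.trace :=
    (mem_trace_iff 𝒯).2 ⟨⟨0, hK⟩, 0, le_rfl, rfl⟩
  refine ⟨_, hz0, ?_⟩
  intro y hy
  rcases eq_or_ne ((𝒯.γ ⟨0, hK⟩).toFun 0) y with rfl | hne
  · exact JoinedIn.refl hz0
  · obtain ⟨p, hpi, hpr⟩ := exists_inj_path 𝒯 hz0 hy hne
    exact ⟨p, fun t => hpr (mem_range_self t)⟩

lemma no_circle : ¬ ∃ A : Set E3, A ⊆ 𝒯.trace ∧ Nonempty (A ≃ₜ Circle) := by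
  rintro ⟨A, hA, ⟨e⟩⟩
  set F : Circle → E3 := fun c => ((e.symm c : A) : E3) with hF
  have hFc : Continuous F := continuous_subtype_val.comp e.symm.continuous
  have hFi : Function.Injective F := Subtype.val_injective.comp e.symm.injective
  have hFA : ∀ c, F c ∈ A := fun c => (e.symm c).2
  have hrF : range F ⊆ 𝒯.trace := by
    rintro y ⟨c, rfl⟩
    exact hA (hFA c)
  have hπ := Real.pi_pos
  -- the two semicircle paths
  set q1 : Path (1 : Circle) (Circle.exp Real.pi) :=
    { toFun := fun t => Circle.exp (Real.pi * t)
      continuous_toFun := Circle.exp.continuous.comp (continuous_const.mul continuous_subtype_val)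
      source' := by norm_num
      target' := by norm_num } with hq1def
  set q2 : Path (1 : Circle) (Circle.exp Real.pi) :=
    { toFun := fun t => Circle.exp (-Real.pi * t)
      continuous_toFun := Circle.exp.continuous.comp (continuous_const.mul continuous_subtype_val)
      source' := by norm_num
      target' := by
        show Circle.exp (-Real.pi * ((1 : unitInterval) : ℝ)) = Circle.exp Real.pi
        rw [show -Real.pi * ((1 : unitInterval) : ℝ) = -Real.pi by norm_num]
        exact Circle.exp_eq_exp.2 ⟨-1, by push_cast; ring⟩ } with hq2def
  have hq1inj : Function.Injective ⇑q1 := by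
    intro s t h
    have h' : Circle.exp (Real.pi * s) = Circle.exp (Real.pi * t) := h
    have := exp_inj_interval h' (by
      rw [show Real.pi * s - Real.pi * t = Real.pi * ((s:ℝ) - t) by ring, abs_mul,
        abs_of_pos hπ]
      have h1 : |(s:ℝ) - t| ≤ 1 := by
        rw [abs_le]
        constructor <;> [linarith [s.2.1, t.2.2]; linarith [s.2.2, t.2.1]]
      nlinarith)
    exact Subtype.ext (by
      have h0 : Real.pi * ((s:ℝ) - t) = 0 := by linarith
      rcases mul_eq_zero.1 h0 with h | h
      · exact absurd h (ne_of_gt hπ)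
      · linarith)
  have hq2inj : Function.Injective ⇑q2 := by
    intro s t h
    have h' : Circle.exp (-Real.pi * s) = Circle.exp (-Real.pi * t) := h
    have := exp_inj_interval h' (by
      rw [show -Real.pi * s - -Real.pi * t = Real.pi * ((t:ℝ) - s) by ring, abs_mul,
        abs_of_pos hπ]
      have h1 : |(t:ℝ) - s| ≤ 1 := by
        rw [abs_le]
        constructor <;> [linarith [t.2.1, s.2.2]; linarith [t.2.2, s.2.1]]
      nlinarith)
    exact Subtype.ext (by
      have h0 : Real.pi * ((t:ℝ) - s) = 0 := by linarith
      rcases mul_eq_zero.1 h0 with h | h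
      · exact absurd h (ne_of_gt hπ)
      · linarith)
  have hzw : F 1 ≠ F (Circle.exp Real.pi) := by
    intro h
    have h1 : (1 : Circle) = Circle.exp Real.pi := hFi h
    rw [show (1 : Circle) = Circle.exp 0 by rw [Circle.exp_zero]] at h1
    have := exp_inj_interval h1 (by rw [abs_of_nonpos (by linarith)]; linarith)
    linarith
  have hz : F 1 ∈ 𝒯.trace := hrF (mem_range_self _)
  have hw : F (Circle.exp Real.pi) ∈ 𝒯.trace := hrF (mem_range_self _)
  set P1 := q1.map hFc with hP1def
  set P2 := q2.map hFc with hP2def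
  have hP1i : Function.Injective ⇑P1 := by
    rw [hP1def, Path.map_coe]
    exact hFi.comp hq1inj
  have hP2i : Function.Injective ⇑P2 := by
    rw [hP2def, Path.map_coe]
    exact hFi.comp hq2inj
  have hP1r : range ⇑P1 ⊆ 𝒯.trace := by
    rw [hP1def, Path.map_coe]
    exact (range_comp_subset_range _ _).trans hrF
  have hP2r : range ⇑P2 ⊆ 𝒯.trace := by
    rw [hP2def, Path.map_coe]
    exact (range_comp_subset_range _ _).trans hrF
  have hequal : range ⇑P1 = range ⇑P2 :=
    unique_range 𝒯 hz hw P1 P2 hP1i hP1r hP2i hP2r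
  have hν1 : F (Circle.exp (Real.pi / 2)) ∈ range ⇑P1 := by
    refine ⟨⟨1/2, by norm_num, by norm_num⟩, ?_⟩
    rw [hP1def, Path.map_coe]
    show F (q1 _) = _
    rw [hq1def]
    show F (Circle.exp (Real.pi * ((1:ℝ)/2))) = _
    rw [show Real.pi * ((1:ℝ)/2) = Real.pi / 2 by ring]
  rw [hequal] at hν1
  obtain ⟨t, ht⟩ := hν1
  rw [hP2def, Path.map_coe] at ht
  have ht' : Circle.exp (-Real.pi * t) = Circle.exp (Real.pi / 2) := hFi ht
  have := exp_inj_interval ht' (by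
    rw [abs_of_nonpos (by nlinarith [t.2.1, t.2.2])]
    nlinarith [t.2.1, t.2.2])
  nlinarith [t.2.1]

end PTreeAux

/-- The trace of any parameterized tree with `K ≥ 1` spanning points is a
one-ended topological tree: it is path-connected, contains no subset homeomorphic to the
circle `S¹`, and between any two distinct points of the trace there is an injective path
in the trace whose image (arc) is unique. -/
theorem paramTree_trace_is_topological_tree (K : ℕ) (hK : 0 < K) (𝒯 : ParamTree K) :
    IsPathConnected 𝒯.trace ∧
    (¬ ∃ A : Set (EuclideanSpace ℝ (Fin 3)), A ⊆ 𝒯.trace ∧ Nonempty (A ≃ₜ Circle)) ∧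
    (∀ z ∈ 𝒯.trace, ∀ w ∈ 𝒯.trace, z ≠ w →
      (∃ p : Path z w, Function.Injective ⇑p ∧ Set.range ⇑p ⊆ 𝒯.trace) ∧
      (∀ p q : Path z w, Function.Injective ⇑p → Set.range ⇑p ⊆ 𝒯.trace →
        Function.Injective ⇑q → Set.range ⇑q ⊆ 𝒯.trace → Set.range ⇑p = Set.range ⇑q)) := by
  
  refine ⟨PTreeAux.trace_pathConnected 𝒯 hK, PTreeAux.no_circle 𝒯, ?_⟩
  intro z hz w hw hzw
  exact ⟨PTreeAux.exists_inj_path 𝒯 hz hw hzw,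
    fun p q hp hpr hq hqr => PTreeAux.unique_range 𝒯 hz hw p q hp hpr hq hqr⟩
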